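/- Let φ be a lower semicontinuous submeasure on ℕ with r_k = φ({k}) → 0 as k → ∞, and let Z = Exh_φ be the associated ideal. Consider the shift action of the group (Z, Δ) on 2^ℕ by symmetric difference, with Z given the topology induced by the metric r(x,y) = φ(x Δ y). Then every point x ∈ 2^ℕ is turbulent: for every open set X ⊆ 2^ℕ containing x and every ε > 0, letting G = {g ∈ Z : φ(g) < ε}, the local orbit O(x, X, G) is somewhere dense in 2^ℕ. -/

import Mathlib

open scoped ENNReal

/-- Let `φ` be a lower semicontinuous submeasure on `ℕ` with `φ({k}) → 0`, and
let `Z = Exh_φ` act on Cantor space by symmetric difference (pointwise `xor`).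
Then every point `x` of `2^ℕ` is turbulent: for every open `X ∋ x` and every
`ε > 0`, taking `G = {g ∈ Z : φ(g) < ε}` (the `ε`-ball around `∅` in the
submeasure topology of `Z`), the local orbit of `x` — the set of points of `X`
reachable from `x` by finitely many steps `a ↦ g Δ a` with `g ∈ G`, all
intermediate points staying in `X` — is somewhere dense (not nowhere dense)
in `2^ℕ`. -/
theorem shift_action_turbulent
    (φ : Set ℕ → ℝ≥0∞)
    (hempty : φ ∅ = 0)
    (hsingleton : ∀ a : ℕ, φ {a} < ⊤)
    (hmono : ∀ x y : Set ℕ, φ x ≤ φ (x ∪ y))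
    (hsubadd : ∀ x y : Set ℕ, φ (x ∪ y) ≤ φ x + φ y)
    (hlsc : ∀ x : Set ℕ, φ x = ⨆ n : ℕ, φ (x ∩ Set.Iio n))
    (htend : Filter.Tendsto (fun k : ℕ => φ {k}) Filter.atTop (nhds 0)) :
    ∀ x : ℕ → Bool, ∀ X : Set (ℕ → Bool), IsOpen X → x ∈ X →
    ∀ ε : ℝ≥0∞, 0 < ε →
    ¬ IsNowhereDense {y : ℕ → Bool |
        Relation.ReflTransGen
          (fun a b : ℕ → Bool =>
            a ∈ X ∧ b ∈ X ∧
            ∃ g : ℕ → Bool,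
              ((⨅ n : ℕ, φ ({m | g m = true} ∩ Set.Ici n)) = 0 ∧
                φ {m | g m = true} < ε) ∧
              b = fun n => xor (g n) (a n))
          x y} := by
  intro x X hX hxX ε hε hND
  classical
  obtain ⟨I, u, hu, hIu⟩ := isOpen_pi_iff.mp hX x hxX
  have hev : ∀ᶠ k in Filter.atTop, φ {k} < ε :=
    htend.eventually_lt_const hε
  obtain ⟨K, hK⟩ := Filter.eventually_atTop.mp hev
  set M : ℕ := max (I.sup id + 1) K with hM
  have hIM : ∀ i ∈ I, i < M := by
    intro i hi
    have : i ≤ I.sup id := Finset.le_sup (f := id) hi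
    exact lt_of_le_of_lt this (lt_of_lt_of_le (Nat.lt_succ_self _) (le_max_left _ _))
  have hKM : ∀ k, M ≤ k → φ {k} < ε := fun k hk => hK k (le_trans (le_max_right _ _) hk)
  have hagree : ∀ z : ℕ → Bool, (∀ i ∈ I, z i = x i) → z ∈ X := by
    intro z hz
    apply hIu
    intro i hi
    rw [hz i hi]
    exact (hu i hi).2
  set R := fun a b : ℕ → Bool =>
    a ∈ X ∧ b ∈ X ∧
    ∃ g : ℕ → Bool,
      ((⨅ n : ℕ, φ ({m | g m = true} ∩ Set.Ici n)) = 0 ∧ φ {m | g m = true} < ε) ∧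
      b = fun n => xor (g n) (a n) with hR
  set S := {y : ℕ → Bool | Relation.ReflTransGen R x y} with hS
  -- the truncated points
  have hzX : ∀ (y : ℕ → Bool), (∀ i < M, y i = x i) →
      ∀ m : ℕ, (fun n => if n < m then y n else x n) ∈ X := by
    intro y hy m
    apply hagree
    intro i hi
    by_cases h : i < m
    · simp only [h, if_pos]
      exact hy i (hIM i hi)
    · simp [h]
  have key : ∀ (y : ℕ → Bool), (∀ i < M, y i = x i) → ∀ m : ℕ,
      Relation.ReflTransGen R x (fun n => if n < m then y n else x n) := by
    intro y hy m
    induction m with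
    | zero =>
      have : (fun n => if n < 0 then y n else x n) = x := by
        funext n; simp
      rw [this]
    | succ m ih =>
      by_cases hm : y m = x m
      · have heq : (fun n => if n < m + 1 then y n else x n)
            = (fun n => if n < m then y n else x n) := by
          funext n
          rcases lt_trichotomy n m with h | h | h
          · simp [h, Nat.lt_succ_of_lt h]
          · subst h; simp [hm]
          · have h1 : ¬ n < m := by omega
            have h2 : ¬ n < m + 1 := by omega
            simp [h1, h2]
        rw [heq]; exact ih
      · have hmM : M ≤ m := by
          by_contra h
          exact hm (hy m (Nat.not_le.mp h))
        refine ih.tail ?_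
        refine ⟨hzX y hy m, hzX y hy (m + 1), fun n => decide (n = m), ⟨?_, ?_⟩, ?_⟩
        · have hset : {m' | (decide (m' = m)) = true} = {m} := by
            ext n; simp
          rw [hset]
          apply le_antisymm _ zero_le
          refine le_trans (iInf_le _ (m + 1)) ?_
          have : ({m} : Set ℕ) ∩ Set.Ici (m + 1) = ∅ := by
            ext n
            simp only [Set.mem_inter_iff, Set.mem_singleton_iff, Set.mem_Ici,
              Set.mem_empty_iff_false, iff_false, not_and]
            rintro rfl; omega
          rw [this, hempty]
        · have hset : {m' | (decide (m' = m)) = true} = {m} := by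
            ext n; simp
          rw [hset]
          exact hKM m hmM
        · funext n
          rcases lt_trichotomy n m with h | h | h
          · simp [h, Nat.lt_succ_of_lt h, Nat.ne_of_lt h]
          · subst h
            have hd : (decide (n = n)) = true := decide_eq_true rfl
            show (if n < n + 1 then y n else x n)
              = (decide (n = n) ^^ if n < n then y n else x n)
            rw [hd, if_pos (Nat.lt_succ_self n), if_neg (lt_irrefl n), Bool.true_xor]
            revert hm
            cases x n <;> cases y n <;> simp
          · have h1 : ¬ n < m := by omega
            have h2 : ¬ n < m + 1 := by omega
            have h3 : n ≠ m := by omega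
            simp [h1, h2, h3]
  -- closure contains the basic clopen set C
  have hC : ∀ y : ℕ → Bool, (∀ i < M, y i = x i) → y ∈ closure S := by
    intro y hy
    rw [mem_closure_iff]
    intro U hU hyU
    obtain ⟨J, v, hv, hJv⟩ := isOpen_pi_iff.mp hU y hyU
    refine ⟨fun n => if n < J.sup id + 1 then y n else x n, ?_, key y hy _⟩
    apply hJv
    intro j hj
    have : j < J.sup id + 1 := Nat.lt_succ_of_le (Finset.le_sup (f := id) hj)
    simp only [this, if_pos]
    exact (hv j hj).2
  -- conclude
  have hopen : IsOpen (Set.pi (Set.Iio M) (fun i => ({x i} : Set Bool))) :=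
    isOpen_set_pi (Set.finite_Iio M) (fun i _ => isOpen_discrete _)
  have hsub : Set.pi (Set.Iio M) (fun i => ({x i} : Set Bool)) ⊆ closure S := by
    intro y hy
    exact hC y (fun i hi => hy i hi)
  have hxint : x ∈ interior (closure S) :=
    interior_maximal hsub hopen (fun i _ => rfl)
  rw [hND] at hxint
  exact hxint
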